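/- Let n be a power of two and let 1 ≤ i ≤ n. Define the update sequence u 0 = i, u (j+1) = u j + 2^(rmb (u j)). Then the update sequence is strictly increasing and reaches exactly 2n after at most log2(2n) steps: there exists t ≤ log2 n + 1 with u t = 2n. -/

import Mathlib

/-- Position of the least significant set bit of a positive natural. -/
def rmb (i : ℕ) : ℕ := padicValNat 2 i

/-- Number of 1-bits in the binary representation. -/
def popcount (i : ℕ) : ℕ := (Nat.bits i).count true

/-- One step of the sum sequence: clear the lowest set bit. -/
def sumStep (x : ℕ) : ℕ := x - 2 ^ rmb x

/-- The sum sequence of `i`. -/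
def sumSeq (i j : ℕ) : ℕ := sumStep^[j] i

/-- One step of the update sequence. -/
def updStep (x : ℕ) : ℕ := x + 2 ^ rmb x

/-- The update sequence of `i`. -/
def updSeq (i j : ℕ) : ℕ := updStep^[j] i

/-- The Fenwick array of `A`: entry `k` sums `A` over `(k - 2^(rmb k), k]`. -/
def fenwick (A : ℕ → ℤ) (k : ℕ) : ℤ := ∑ m ∈ Finset.Ioc (k - 2 ^ rmb k) k, A m

lemma updSeq_succ (i j : ℕ) : updSeq i (j+1) = updStep (updSeq i j) := by
  simp [updSeq, Function.iterate_succ_apply']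

lemma key (h x : ℕ) (hx : 0 < x) (hlt : x < 2^(h+1)) (j : ℕ) (hdvd : 2^j ∣ x) :
    0 < updStep x ∧ updStep x ≤ 2^(h+1) ∧ 2^(j+1) ∣ updStep x := by
  have hx' : x ≠ 0 := hx.ne'
  haveI : Fact (Nat.Prime 2) := ⟨Nat.prime_two⟩
  set v := padicValNat 2 x with hv
  have hvd : 2^v ∣ x := pow_padicValNat_dvd
  have hjv : j ≤ v := (padicValNat_dvd_iff_le hx').mp hdvd
  obtain ⟨m, hm⟩ := hvd
  have hmodd : ¬ 2 ∣ m := by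
    intro ⟨k, hk⟩
    have : 2^(v+1) ∣ x := ⟨k, by rw [hm, hk]; ring⟩
    have := (padicValNat_dvd_iff_le hx').mp this
    omega
  have hmpos : 0 < m := by
    rcases Nat.eq_zero_or_pos m with h0 | h0
    · simp [h0] at hm; omega
    · exact h0
  have hstep : updStep x = 2^v * (m+1) := by
    show x + 2^(padicValNat 2 x) = _
    rw [← hv, hm]; ring
  refine ⟨by rw [hstep]; positivity, ?_, ?_⟩
  · -- x < 2^(h+1), 2^v ∣ x so x ≤ 2^(h+1) - 2^v since 2^v ∣ 2^(h+1)? need v ≤ h+1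
    have hvle : 2^v ≤ x := Nat.le_of_dvd hx pow_padicValNat_dvd
    have hvh : v ≤ h := by
      by_contra hc
      have : 2^(h+1) ≤ 2^v := Nat.pow_le_pow_right (by norm_num) (by omega)
      omega
    -- 2^v*m < 2^(h+1) = 2^v * 2^(h+1-v), so m < 2^(h+1-v), m+1 ≤ 2^(h+1-v)
    have h2 : 2^(h+1) = 2^v * 2^(h+1-v) := by
      rw [← pow_add]; congr 1; omega
    have hmlt : m < 2^(h+1-v) := by
      have := hlt; rw [hm, h2] at this
      exact lt_of_mul_lt_mul_left this (Nat.zero_le _)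
    rw [hstep, h2]
    exact Nat.mul_le_mul_left _ (by omega)
  · have : 2 ∣ m + 1 := by omega
    obtain ⟨k, hk⟩ := this
    refine dvd_trans (pow_dvd_pow 2 (by omega : j+1 ≤ v+1)) ⟨k, ?_⟩
    rw [hstep, hk, pow_succ]; ring

theorem updSeq_strictMono_and_reaches (n i : ℕ) (hn : ∃ h, n = 2 ^ h)
    (h1 : 1 ≤ i) (h2 : i ≤ n) :
    StrictMono (updSeq i) ∧ ∃ t ≤ Nat.log2 n + 1, updSeq i t = 2 * n := by
  obtain ⟨h, rfl⟩ := hn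
  constructor
  · apply strictMono_nat_of_lt_succ
    intro j
    rw [updSeq_succ, updStep]
    have : 0 < 2 ^ rmb (updSeq i j) := Nat.pow_pos (by norm_num)
    omega
  · have hlog : Nat.log2 (2^h) = h := by
      rw [Nat.log2_eq_log_two, Nat.log_pow (by norm_num)]
    rw [hlog]
    have h2n : 2 * 2^h = 2^(h+1) := by ring
    have main : ∀ j, (∃ t ≤ j, updSeq i t = 2^(h+1)) ∨
        (0 < updSeq i j ∧ updSeq i j < 2^(h+1) ∧ 2^j ∣ updSeq i j) := by
      intro j
      induction j with
      | zero =>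
        right
        refine ⟨h1, ?_, one_dvd _⟩
        show i < 2^(h+1)
        have : (2:ℕ)^h < 2^(h+1) := Nat.pow_lt_pow_right (by norm_num) (by omega)
        omega
      | succ j ih =>
        rcases ih with ⟨t, ht, he⟩ | ⟨hp, hlt, hd⟩
        · exact Or.inl ⟨t, by omega, he⟩
        · obtain ⟨p1, p2, p3⟩ := key h _ hp hlt j hd
          rw [← updSeq_succ] at p1 p2 p3
          rcases eq_or_lt_of_le p2 with heq | hlt'
          · exact Or.inl ⟨j+1, le_refl _, heq⟩
          · exact Or.inr ⟨p1, hlt', p3⟩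
    rcases main (h+1) with ⟨t, ht, he⟩ | ⟨hp, hlt, hd⟩
    · exact ⟨t, ht, by rw [he, h2n]⟩
    · exfalso
      have := Nat.le_of_dvd hp hd
      omega
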